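/- Let u be a C² radial function on ℝ² satisfying u'' + u'/r + e^{2u} ≤ 0. Define A(r) = 2π∫₀^r ρe^{2u(ρ)}dρ and l(r) = 2πr e^{u(r)}. Then for all r > 0, l(r)² ≤ 4πA(r) − A(r)². -/

import Mathlib

open Real

theorem stmt_9 (u : ℝ → ℝ) (hu : ContDiff ℝ 2 u) (hu0 : deriv u 0 = 0)
    (hineq : ∀ r : ℝ, 0 < r →
      deriv (deriv u) r + deriv u r / r + Real.exp (2 * u r) ≤ 0) :
    ∀ r : ℝ, 0 < r →
      (2 * π * r * Real.exp (u r))^2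
        ≤ 4 * π * (2 * π * ∫ ρ in (0:ℝ)..r, ρ * Real.exp (2 * u ρ))
          - (2 * π * ∫ ρ in (0:ℝ)..r, ρ * Real.exp (2 * u ρ))^2 := by
  intro r hr
  have hucont : Continuous u := hu.continuous
  have hdu : ContDiff ℝ 1 (deriv u) := by
    rw [show (2 : WithTop ℕ∞) = 1 + 1 from rfl, contDiff_succ_iff_deriv] at hu
    exact hu.2.2
  have hducont : Continuous (deriv u) := hdu.continuous
  have hdud : Differentiable ℝ (deriv u) := hdu.differentiable (by norm_num)
  have hud : Differentiable ℝ u := hu.differentiable (by norm_num)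
  set f : ℝ → ℝ := fun ρ => ρ * Real.exp (2 * u ρ) with hf_def
  have hf : Continuous f := continuous_id.mul ((continuous_const.mul hucont).rexp)
  set I : ℝ → ℝ := fun x => ∫ ρ in (0:ℝ)..x, f ρ with hI_def
  have hI : ∀ x : ℝ, HasDerivAt I (f x) x := fun x =>
    (hf.integral_hasStrictDerivAt 0 x).hasDerivAt
  have hIcont : Continuous I := by
    have : Differentiable ℝ I := fun x => (hI x).differentiableAt
    exact this.continuous
  -- auxiliary function h = x u'(x) + I(x)
  set h : ℝ → ℝ := fun x => x * deriv u x + I x with hh_def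
  have hh : ∀ x : ℝ, HasDerivAt h (deriv u x + x * deriv (deriv u) x + f x) x := by
    intro x
    have h1 : HasDerivAt (fun x => x * deriv u x)
        (1 * deriv u x + x * deriv (deriv u) x) x :=
      (hasDerivAt_id x).mul ((hdud x).hasDerivAt)
    have := h1.add (hI x)
    simp only [one_mul] at this
    exact this
  have hhcont : Continuous h := (continuous_id.mul hducont).add hIcont
  -- Step 1: h ≤ 0 on (0, ∞)
  have step1 : ∀ x : ℝ, 0 < x → h x ≤ 0 := by
    intro x hx
    have hanti : AntitoneOn h (Set.Icc 0 x) := by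
      apply antitoneOn_of_deriv_nonpos (convex_Icc 0 x) hhcont.continuousOn
      · intro y _
        exact ((hh y).differentiableAt).differentiableWithinAt
      · intro y hy
        rw [interior_Icc] at hy
        rw [(hh y).deriv]
        have hy0 : 0 < y := hy.1
        have := hineq y hy0
        have hne : y ≠ 0 := ne_of_gt hy0
        have : y * (deriv (deriv u) y + deriv u y / y + Real.exp (2 * u y)) ≤ 0 :=
          mul_nonpos_of_nonneg_of_nonpos (le_of_lt hy0) this
        calc deriv u y + y * deriv (deriv u) y + f y
            = y * (deriv (deriv u) y + deriv u y / y + Real.exp (2 * u y)) := by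
              field_simp [hf_def]; ring
          _ ≤ 0 := this
    have h0 : h 0 = 0 := by simp [hh_def, hI_def]
    have := hanti (Set.left_mem_Icc.mpr (le_of_lt hx)) (Set.right_mem_Icc.mpr (le_of_lt hx)) (le_of_lt hx)
    simpa [h0] using this
  -- Step 2: the function F
  set g : ℝ → ℝ := fun x => 2 * π * x * Real.exp (u x) with hg_def
  have hg : ∀ x : ℝ, HasDerivAt g
      (2 * π * Real.exp (u x) + 2 * π * x * (Real.exp (u x) * deriv u x)) x := by
    intro x
    have he : HasDerivAt (fun x => Real.exp (u x)) (Real.exp (u x) * deriv u x) x :=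
      ((hud x).hasDerivAt).exp
    have h1 : HasDerivAt (fun x => 2 * π * x) (2 * π) x := by
      simpa using (hasDerivAt_id x).const_mul (2 * π)
    exact h1.mul he
  have hgcont : Continuous g :=
    ((continuous_const.mul continuous_id).mul hucont.rexp)
  set F : ℝ → ℝ := fun x => 4 * π * (2 * π * I x) - (2 * π * I x)^2 - (g x)^2 with hF_def
  have hF : ∀ x : ℝ, HasDerivAt F
      (4 * π * (2 * π * f x) - 2 * (2 * π * I x) * (2 * π * f x)
        - 2 * g x * (2 * π * Real.exp (u x) + 2 * π * x * (Real.exp (u x) * deriv u x))) x := by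
    intro x
    have hA : HasDerivAt (fun x => 2 * π * I x) (2 * π * f x) x := (hI x).const_mul _
    have h1 : HasDerivAt (fun x => 4 * π * (2 * π * I x)) (4 * π * (2 * π * f x)) x :=
      hA.const_mul _
    have h2 : HasDerivAt (fun x => (2 * π * I x)^2) (2 * (2 * π * I x) * (2 * π * f x)) x := by
      have h2' := hA.mul hA
      simp only [pow_two]
      exact h2'.congr_deriv (by ring)
    have h3 : HasDerivAt (fun x => (g x)^2)
        (2 * g x * (2 * π * Real.exp (u x) + 2 * π * x * (Real.exp (u x) * deriv u x))) x := by
      have h3' := (hg x).mul (hg x)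
      simp only [pow_two]
      exact h3'.congr_deriv (by ring)
    exact (h1.sub h2).sub h3
  have hFcont : Continuous F := by
    have : Differentiable ℝ F := fun x => (hF x).differentiableAt
    exact this.continuous
  have hmono : MonotoneOn F (Set.Icc 0 r) := by
    apply monotoneOn_of_deriv_nonneg (convex_Icc 0 r) hFcont.continuousOn
    · intro y _
      exact ((hF y).differentiableAt).differentiableWithinAt
    · intro y hy
      rw [interior_Icc] at hy
      have hy0 : 0 < y := hy.1
      rw [(hF y).deriv]
      have key : y * deriv u y + I y ≤ 0 := step1 y hy0
      have hE : Real.exp (2 * u y) = Real.exp (u y) * Real.exp (u y) := by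
        rw [← Real.exp_add]; congr 1; ring
      have hfact : 4 * π * (2 * π * f y) - 2 * (2 * π * I y) * (2 * π * f y)
          - 2 * g y * (2 * π * Real.exp (u y) + 2 * π * y * (Real.exp (u y) * deriv u y))
          = -(8 * π^2 * y * (Real.exp (u y) * Real.exp (u y))) * (y * deriv u y + I y) := by
        simp only [hf_def, hg_def, hE]; ring
      rw [hfact]
      have hp : 0 ≤ 8 * π^2 * y * (Real.exp (u y) * Real.exp (u y)) := by positivity
      nlinarith [mul_nonneg hp (neg_nonneg.mpr key)]
  have hF0 : F 0 = 0 := by simp [hF_def, hI_def, hg_def]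
  have hFr : 0 ≤ F r := by
    have := hmono (Set.left_mem_Icc.mpr (le_of_lt hr)) (Set.right_mem_Icc.mpr (le_of_lt hr)) (le_of_lt hr)
    simpa [hF0] using this
  simp only [hF_def, hg_def, hI_def] at hFr
  linarith
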